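/- Let P̃ : (−ε, ε) → M_N(ℂ) be an analytic family of orthogonal projections of the form P̃(k) = P̃₀ + Σ_{j≥1} P̃_j k^j, satisfying P̃(k) e₁ = e₁ for all k < 0 and P̃(k) e₂ = e₂ for all k > 0, where e₁, e₂ are the first two standard basis vectors. Suppose P̃₀ is the orthogonal projection onto span(e₁, e₂). Then P̃(k) = P̃₀ for all k ∈ (−ε, ε). -/

import Mathlib

set_option maxHeartbeats 1000000
set_option synthInstance.maxHeartbeats 400000

open ContinuousLinearMap Set

section Aux

variable {M : Type*} [NormedAddCommGroup M] [NormedSpace ℝ M]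

/-- A function given by a convergent power series on `(-ε, ε)` has a formal power series
on the corresponding ball. -/
lemma aux_hasFPowerSeriesOnBall {ε : ℝ} (hε : 0 < ε) (f : ℝ → M) (A : ℕ → M)
    (hsum : ∀ k ∈ Ioo (-ε) ε, HasSum (fun j : ℕ => k ^ j • A j) (f k)) :
    HasFPowerSeriesOnBall f
      (fun n => ContinuousMultilinearMap.mkPiRing ℝ (Fin n) (A n)) 0
      (ENNReal.ofReal ε) := by
  set p : FormalMultilinearSeries ℝ ℝ M :=
    fun n => ContinuousMultilinearMap.mkPiRing ℝ (Fin n) (A n) with hp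
  have hball : Metric.eball (0 : ℝ) (ENNReal.ofReal ε) = Ioo (-ε) ε := by
    ext y
    simp [Metric.mem_eball, edist_dist, Real.dist_eq,
      ENNReal.ofReal_lt_ofReal_iff hε, abs_lt]
  refine ⟨?_, by simpa using hε, ?_⟩
  · apply ENNReal.le_of_forall_nnreal_lt
    intro r hr
    have hrε : (r : ℝ) < ε := by
      rw [← ENNReal.ofReal_coe_nnreal] at hr
      exact (ENNReal.ofReal_lt_ofReal_iff hε).mp hr
    have hk : (r : ℝ) ∈ Ioo (-ε) ε := ⟨lt_of_lt_of_le (by linarith) r.coe_nonneg, hrε⟩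
    have ht : Filter.Tendsto (fun n : ℕ => ‖(r : ℝ) ^ n • A n‖) Filter.atTop (nhds 0) := by
      simpa using ((hsum _ hk).summable.tendsto_atTop_zero).norm
    apply p.le_radius_of_tendsto (l := 0)
    have : (fun n : ℕ => ‖p n‖ * (r : ℝ) ^ n) = fun n : ℕ => ‖(r : ℝ) ^ n • A n‖ := by
      funext n
      rw [hp, ContinuousMultilinearMap.norm_mkPiRing, norm_smul, norm_pow,
        Real.norm_eq_abs, abs_of_nonneg r.coe_nonneg, mul_comm]
    rw [this]
    exact ht
  · intro y hy
    rw [hball] at hy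
    have := hsum y hy
    rw [zero_add]
    convert this using 2 with n
    simp [hp, ContinuousMultilinearMap.mkPiRing_apply]

/-- If a function given by a convergent power series on `(-ε, ε)` is constant near `0`,
then all its higher coefficients vanish. -/
lemma aux_coeff_eq_zero {ε : ℝ} (hε : 0 < ε) (f : ℝ → M) (A : ℕ → M)
    (hsum : ∀ k ∈ Ioo (-ε) ε, HasSum (fun j : ℕ => k ^ j • A j) (f k))
    (c : M) (hconst : f =ᶠ[nhds 0] fun _ => c) :
    ∀ n : ℕ, n ≠ 0 → A n = 0 := by
  intro n hn
  have h1 : HasFPowerSeriesAt f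
      (fun m => ContinuousMultilinearMap.mkPiRing ℝ (Fin m) (A m)) 0 :=
    (aux_hasFPowerSeriesOnBall hε f A hsum).hasFPowerSeriesAt
  have h2 : HasFPowerSeriesAt (fun _ : ℝ => c)
      (constFormalMultilinearSeries ℝ ℝ c) 0 := hasFPowerSeriesAt_const
  have heq := h1.eq_formalMultilinearSeries_of_eventually h2 hconst
  have := congrFun heq n
  have happ := congrArg (fun q => q (fun _ : Fin n => (1 : ℝ))) this
  simpa [ContinuousMultilinearMap.mkPiRing_apply,
    constFormalMultilinearSeries_apply_of_nonzero hn] using happ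

end Aux

/-- An analytic family `P̃(k) = Σ_j P̃_j k^j` of orthogonal projections
on `(−ε, ε)` with `P̃(k)e₁ = e₁` for `k < 0`, `P̃(k)e₂ = e₂` for `k > 0`, and `P̃₀` the
orthogonal projection onto `span(e₁, e₂)`, is constant: `P̃(k) = P̃₀` on `(−ε, ε)`. -/
theorem analytic_projection_family_is_constant
    {N : ℕ} (ε : ℝ) (hε : 0 < ε) (hN : 2 ≤ N)
    (Pt : ℝ → (EuclideanSpace ℂ (Fin N) →L[ℂ] EuclideanSpace ℂ (Fin N)))
    (A : ℕ → (EuclideanSpace ℂ (Fin N) →L[ℂ] EuclideanSpace ℂ (Fin N)))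
    (hsum : ∀ k ∈ Ioo (-ε) ε, HasSum (fun j : ℕ => k ^ j • A j) (Pt k))
    (hproj : ∀ k ∈ Ioo (-ε) ε, (Pt k) ∘L (Pt k) = Pt k)
    (hsa : ∀ k ∈ Ioo (-ε) ε, ContinuousLinearMap.adjoint (Pt k) = Pt k)
    (e₁ e₂ : EuclideanSpace ℂ (Fin N))
    (he₁ : e₁ = EuclideanSpace.single ⟨0, by omega⟩ 1)
    (he₂ : e₂ = EuclideanSpace.single ⟨1, by omega⟩ 1)
    (h1 : ∀ k ∈ Ioo (-ε) (0:ℝ), Pt k e₁ = e₁)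
    (h2 : ∀ k ∈ Ioo (0:ℝ) ε, Pt k e₂ = e₂)
    (hA0 : A 0 = (Submodule.span ℂ {e₁, e₂}).subtypeL ∘L
        Submodule.orthogonalProjectionOnto (Submodule.span ℂ {e₁, e₂})) :
    ∀ k ∈ Ioo (-ε) ε, Pt k = A 0 := by
  classical
  set U : Submodule ℂ (EuclideanSpace ℂ (Fin N)) := Submodule.span ℂ {e₁, e₂} with hU
  -- the power series representation
  have hball := aux_hasFPowerSeriesOnBall hε Pt A hsum
  have hballEq : Metric.eball (0 : ℝ) (ENNReal.ofReal ε) = Ioo (-ε) ε := by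
    ext y
    simp [Metric.mem_eball, edist_dist, Real.dist_eq,
      ENNReal.ofReal_lt_ofReal_iff hε, abs_lt]
  have hOn : AnalyticOnNhd ℝ Pt (Ioo (-ε) ε) := by
    rw [← hballEq]; exact hball.analyticOnNhd
  -- identity theorem: Pt k fixes e₁ and e₂ on all of (-ε, ε)
  have hfix : ∀ v : EuclideanSpace ℂ (Fin N), (∃ k₀ ∈ Ioo (-ε) ε, ∀ᶠ k in nhds k₀, Pt k v = v) →
      ∀ k ∈ Ioo (-ε) ε, Pt k v = v := by
    rintro v ⟨k₀, hk₀, hev⟩ k hk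
    have happ : AnalyticOnNhd ℝ (fun k => Pt k v) (Ioo (-ε) ε) := by
      have := (((ContinuousLinearMap.apply ℂ (EuclideanSpace ℂ (Fin N)) v).restrictScalars
        ℝ).comp_analyticOnNhd hOn)
      exact this
    have := happ.eqOn_of_preconnected_of_eventuallyEq
      (analyticOnNhd_const (v := v)) isPreconnected_Ioo hk₀ hev
    exact this hk
  have hfix1 : ∀ k ∈ Ioo (-ε) ε, Pt k e₁ = e₁ := by
    refine hfix e₁ ⟨-ε/2, ⟨by linarith, by linarith⟩, ?_⟩
    filter_upwards [isOpen_Ioo.mem_nhds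
      (show -ε/2 ∈ Ioo (-ε) (0:ℝ) from ⟨by linarith, by linarith⟩)] with k hk
    exact h1 k hk
  have hfix2 : ∀ k ∈ Ioo (-ε) ε, Pt k e₂ = e₂ := by
    refine hfix e₂ ⟨ε/2, ⟨by linarith, by linarith⟩, ?_⟩
    filter_upwards [isOpen_Ioo.mem_nhds
      (show ε/2 ∈ Ioo (0:ℝ) ε from ⟨by linarith, by linarith⟩)] with k hk
    exact h2 k hk
  -- Pt k fixes everything in the span
  have hfixU : ∀ k ∈ Ioo (-ε) ε, ∀ z ∈ U, Pt k z = z := by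
    intro k hk z hz
    obtain ⟨a, b, rfl⟩ := Submodule.mem_span_pair.mp hz
    simp [map_add, hfix1 k hk, hfix2 k hk]
  -- Pt k ∘ A 0 = A 0
  have hPA : ∀ k ∈ Ioo (-ε) ε, Pt k ∘L A 0 = A 0 := by
    intro k hk
    refine ContinuousLinearMap.ext fun x => ?_
    have hmem : A 0 x ∈ U := by
      rw [hA0]
      simp only [ContinuousLinearMap.comp_apply, Submodule.subtypeL_apply]
      exact (U.orthogonalProjectionOnto x).2
    simp only [ContinuousLinearMap.comp_apply]
    exact hfixU k hk _ hmem
  -- self-adjointness of A 0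
  have hA0sa : ContinuousLinearMap.adjoint (A 0) = A 0 := by
    rw [hA0]
    exact (isSelfAdjoint_starProjection U).adjoint_eq
  -- A 0 ∘ Pt k = A 0
  have hAP : ∀ k ∈ Ioo (-ε) ε, A 0 ∘L Pt k = A 0 := by
    intro k hk
    have := congrArg ContinuousLinearMap.adjoint (hPA k hk)
    rwa [ContinuousLinearMap.adjoint_comp, hsa k hk, hA0sa] at this
  -- A 0 is idempotent
  have hidem0 : A 0 ∘L A 0 = A 0 := by
    refine ContinuousLinearMap.ext fun x => ?_
    simp [hA0, Submodule.orthogonalProjectionOnto_mem_subspace_eq_self]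
    exact Submodule.starProjection_eq_self_iff.mpr (U.orthogonalProjectionOnto x).2
  -- Q k := Pt k - A 0 is idempotent
  have hQ : ∀ k ∈ Ioo (-ε) ε, (Pt k - A 0) ∘L (Pt k - A 0) = Pt k - A 0 := by
    intro k hk
    rw [sub_comp, comp_sub, comp_sub, hproj k hk, hPA k hk, hAP k hk, hidem0]
    abel
  -- Pt 0 = A 0
  have hPt0 : Pt 0 = A 0 := by
    have h0 : (0:ℝ) ∈ Ioo (-ε) ε := ⟨by linarith, hε⟩
    have hs : HasSum (fun j : ℕ => (0:ℝ) ^ j • A j) (A 0) := by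
      have := hasSum_single (f := fun j : ℕ => (0:ℝ) ^ j • A j) 0
        (fun b hb => by show (0:ℝ) ^ b • A b = 0; rw [zero_pow hb]; exact zero_smul ℝ (A b))
      simpa using this
    exact (hsum 0 h0).unique hs
  -- Pt is eventually equal to A 0 near 0
  have hconst : Pt =ᶠ[nhds 0] fun _ => A 0 := by
    have hcont : ContinuousAt Pt 0 := hball.hasFPowerSeriesAt.continuousAt
    have htend : Filter.Tendsto (fun k => ‖Pt k - A 0‖) (nhds 0) (nhds 0) := by
      have h' : Filter.Tendsto Pt (nhds 0) (nhds (A 0)) := by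
        rw [← hPt0]; exact hcont
      have := (h'.sub (tendsto_const_nhds (x := A 0))).norm
      simpa using this
    have hev1 : ∀ᶠ k in nhds (0:ℝ), ‖Pt k - A 0‖ < 1 :=
      htend.eventually_lt_const one_pos
    have hev2 : ∀ᶠ k in nhds (0:ℝ), k ∈ Ioo (-ε) ε :=
      isOpen_Ioo.mem_nhds ⟨by linarith, hε⟩
    filter_upwards [hev1, hev2] with k hk1 hk2
    have hQk := hQ k hk2
    have hzero : Pt k - A 0 = 0 := by
      by_contra hne
      have hpos : 0 < ‖Pt k - A 0‖ := norm_pos_iff.mpr hne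
      have hle : ‖Pt k - A 0‖ ≤ ‖Pt k - A 0‖ * ‖Pt k - A 0‖ := by
        calc ‖Pt k - A 0‖ = ‖(Pt k - A 0) ∘L (Pt k - A 0)‖ := by rw [hQk]
          _ ≤ ‖Pt k - A 0‖ * ‖Pt k - A 0‖ := opNorm_comp_le _ _
      nlinarith
    have := sub_eq_zero.mp hzero
    simpa using this
  -- higher coefficients vanish
  have hAzero : ∀ n : ℕ, n ≠ 0 → A n = 0 :=
    aux_coeff_eq_zero hε Pt A hsum (A 0) hconst
  -- conclusion
  intro k hk
  have hs : HasSum (fun j : ℕ => k ^ j • A j) (A 0) := by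
    have := hasSum_single (f := fun j : ℕ => k ^ j • A j) 0
      (fun b hb => by show k ^ b • A b = 0; rw [hAzero b hb]; exact ContinuousLinearMap.ext fun x => by simp)
    simpa using this
  exact (hsum k hk).unique hs
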